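/- Let s, t be integers with 1 ≤ s, t ≤ q−1 and s ≠ t. If (q−1)/k does not divide s−t and v₂(s−t) ≠ v₂(q−1) − v₂(k) − 1, then the 2k elements γ^s·α_1, …, γ^s·α_k, γ^t·α_1, …, γ^t·α_k of F_q are pairwise distinct, and γ^{sk} + γ^{tk} ≠ 0 in F_q. -/
import Mathlib

/-- Lemma on the evaluation points: if `(q-1)/k ∤ s - t` and
`v₂(s-t) ≠ v₂(q-1) - v₂(k) - 1`, then the `2k` elements
`γ^s·α_1, …, γ^s·α_k, γ^t·α_1, …, γ^t·α_k` are pairwise distinct and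
`γ^{sk} + γ^{tk} ≠ 0`. -/
theorem stmt5 {F : Type} [Field F] [Fintype F]
    (p m : ℕ) (hp : p.Prime) (hodd : Odd p) (hm : 0 < m)
    (hcard : Fintype.card F = p ^ m)
    (γ : Fˣ) (hγ : ∀ x : Fˣ, x ∈ Subgroup.zpowers γ)
    (k : ℕ) (hk2 : 2 ≤ k) (hkdvd : k ∣ Fintype.card F - 1)
    (α : Fin k → F)
    (hα : ∀ i : Fin k, α i = (γ : F) ^ ((Fintype.card F - 1) / k * ((i : ℕ) + 1)))
    (s t : ℕ) (hs1 : 1 ≤ s) (hsq : s ≤ Fintype.card F - 1)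
    (ht1 : 1 ≤ t) (htq : t ≤ Fintype.card F - 1) (hst : s ≠ t)
    (hdvd : ¬ ((((Fintype.card F - 1) / k : ℕ) : ℤ) ∣ ((s : ℤ) - (t : ℤ))))
    (hv2 : (padicValNat 2 ((s : ℤ) - (t : ℤ)).natAbs : ℤ) ≠
      (padicValNat 2 (Fintype.card F - 1) : ℤ) - (padicValNat 2 k : ℤ) - 1) :
    Function.Injective (Sum.elim (fun i : Fin k => (γ : F) ^ s * α i)
        (fun i : Fin k => (γ : F) ^ t * α i)) ∧
      (γ : F) ^ (s * k) + (γ : F) ^ (t * k) ≠ 0 := by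
  -- basic facts
  have hp3 : 3 ≤ p := by
    have h2 := hp.two_le
    have := Nat.odd_iff.mp hodd
    omega
  have hpm3 : 3 ≤ p ^ m := le_trans hp3 (Nat.le_self_pow hm.ne' p)
  have hpmodd : Odd (p ^ m) := hodd.pow
  have hnpos : 0 < Fintype.card F - 1 := by rw [hcard]; omega
  have hkpos : 0 < k := by omega
  have hdpos : 0 < (Fintype.card F - 1) / k := Nat.div_pos (Nat.le_of_dvd hnpos hkdvd) hkpos
  have hdk : (Fintype.card F - 1) / k * k = Fintype.card F - 1 := Nat.div_mul_cancel hkdvd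
  set n := Fintype.card F - 1 with hn
  set d := n / k with hd
  have hord : orderOf γ = n := by
    rw [orderOf_eq_card_of_forall_mem_zpowers hγ, Nat.card_units, Nat.card_eq_fintype_card]
  -- pow equality criterion, transported to F
  have key : ∀ a b : ℕ, (γ : F) ^ a = (γ : F) ^ b → (n : ℤ) ∣ (b : ℤ) - (a : ℤ) := by
    intro a b hab
    have h1 : ((γ ^ a : Fˣ) : F) = ((γ ^ b : Fˣ) : F) := by push_cast; exact hab
    have h2 : γ ^ a = γ ^ b := Units.ext h1
    have h3 : a ≡ b [MOD n] := by rw [← hord]; exact (pow_eq_pow_iff_modEq.mp h2)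
    exact (Nat.modEq_iff_dvd).mp h3
  constructor
  · -- injectivity
    have same : ∀ (u : ℕ) (i j : Fin k),
        (γ : F) ^ u * α i = (γ : F) ^ u * α j → i = j := by
      intro u i j hij
      rw [hα i, hα j, ← pow_add, ← pow_add] at hij
      have h := key _ _ hij
      rw [show ((u + d * ((j:ℕ)+1) : ℕ) : ℤ) - ((u + d * ((i:ℕ)+1) : ℕ) : ℤ)
          = (d : ℤ) * (((j:ℕ):ℤ) - ((i:ℕ):ℤ)) by push_cast; ring] at h
      rw [show ((n : ℕ) : ℤ) = (d : ℤ) * (k : ℤ) by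
          rw [← hdk]; push_cast; ring] at h
      have hk' : (k : ℤ) ∣ (((j:ℕ):ℤ) - ((i:ℕ):ℤ)) :=
        (mul_dvd_mul_iff_left (by exact_mod_cast hdpos.ne' : (d:ℤ) ≠ 0)).mp h
      have : (((j:ℕ):ℤ) - ((i:ℕ):ℤ)) = 0 := by
        refine Int.eq_zero_of_abs_lt_dvd hk' ?_
        have hi := i.isLt; have hj := j.isLt
        rw [abs_lt]; constructor <;> [skip; skip] <;> push_cast <;> omega
      ext
      omega
    have cross : ∀ (i j : Fin k),
        (γ : F) ^ s * α i = (γ : F) ^ t * α j → False := by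
      intro i j hij
      rw [hα i, hα j, ← pow_add, ← pow_add] at hij
      have h := key _ _ hij
      apply hdvd
      have hdn : (d : ℤ) ∣ (n : ℤ) := by
        refine ⟨(k : ℤ), ?_⟩; rw [← hdk]; push_cast; ring
      have h2 : (d : ℤ) ∣ ((t + d * ((j:ℕ)+1) : ℕ) : ℤ) - ((s + d * ((i:ℕ)+1) : ℕ) : ℤ) :=
        dvd_trans hdn h
      have h3 : (d : ℤ) ∣ ((t : ℤ) - (s : ℤ)) := by
        have : ((t + d * ((j:ℕ)+1) : ℕ) : ℤ) - ((s + d * ((i:ℕ)+1) : ℕ) : ℤ)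
            = ((t : ℤ) - (s : ℤ)) + (d : ℤ) * (((j:ℕ):ℤ) - ((i:ℕ):ℤ)) := by push_cast; ring
        rw [this] at h2
        exact (dvd_add_right (Dvd.intro _ rfl)).mp (by rwa [add_comm] at h2)
      have h4 : (d : ℤ) ∣ -((t : ℤ) - (s : ℤ)) := dvd_neg.mpr h3
      rwa [neg_sub] at h4
    intro x y hxy
    rcases x with i | i <;> rcases y with j | j <;> simp only [Sum.elim_inl, Sum.elim_inr] at hxy
    · exact congrArg Sum.inl (same s i j hxy)
    · exact absurd hxy (fun h => cross i j h)
    · exact absurd hxy.symm (fun h => cross j i h)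
    · exact congrArg Sum.inr (same t i j hxy)
  · -- second part
    intro hzero
    -- -1 ≠ 1 in F
    have hchar : ringChar F ≠ 2 := by
      intro h2
      have hc : ((Fintype.card F : ℕ) : F) = 0 := FiniteField.cast_card_eq_zero F
      have := (CharP.cast_eq_zero_iff F (ringChar F) (Fintype.card F)).mp hc
      rw [h2, hcard] at this
      have := Nat.odd_iff.mp hpmodd
      omega
    have hneg : (-1 : F) ≠ 1 := Ring.neg_one_ne_one_of_char_ne_two hchar
    set e : ℤ := ((s * k : ℕ) : ℤ) - ((t * k : ℕ) : ℤ) with he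
    have hU : (γ ^ (s * k) : Fˣ) = -1 * γ ^ (t * k) := by
      apply Units.ext
      push_cast
      linear_combination hzero
    have huu : γ ^ e = (-1 : Fˣ) := by
      rw [he, zpow_sub, zpow_natCast, zpow_natCast, hU, mul_assoc,
        mul_inv_cancel, mul_one]
    have hsq2 : γ ^ (2 * e) = 1 := by
      rw [mul_comm, zpow_mul, huu]; exact neg_one_sq
    have hne1 : γ ^ e ≠ 1 := by
      rw [huu]; intro h; exact hneg (by simpa using congrArg Units.val h)
    have hdvd2 : (n : ℤ) ∣ 2 * e := by rw [← hord]; exact orderOf_dvd_iff_zpow_eq_one.mpr hsq2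
    have hndvd : ¬ (n : ℤ) ∣ e := by
      rw [← hord]; intro h; exact hne1 (orderOf_dvd_iff_zpow_eq_one.mp h)
    obtain ⟨w, hw⟩ := hdvd2
    have hwodd : Odd w := by
      rcases Int.even_or_odd w with hev | hod
      · obtain ⟨w', hw'⟩ := hev
        exfalso; apply hndvd
        refine ⟨w', ?_⟩
        have h2 : (2 : ℤ) * e = 2 * ((n : ℤ) * w') := by rw [hw, hw']; ring
        linarith
      · exact hod
    have he0 : e ≠ 0 := by
      intro h0
      rw [he] at h0
      have hsk : s * k = t * k := by exact_mod_cast sub_eq_zero.mp h0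
      exact hst (Nat.eq_of_mul_eq_mul_right hkpos hsk)
    have hw0 : w ≠ 0 := by
      intro h0; rw [h0, mul_zero] at hw; omega
    -- pass to natAbs and padic valuations
    have hD : e.natAbs = ((s : ℤ) - (t : ℤ)).natAbs * k := by
      rw [he, show ((s * k : ℕ) : ℤ) - ((t * k : ℕ) : ℤ) = ((s : ℤ) - t) * k by push_cast; ring,
        Int.natAbs_mul, Int.natAbs_natCast]
    have hnatAbs : 2 * (((s : ℤ) - (t : ℤ)).natAbs * k) = n * w.natAbs := by
      simpa [Int.natAbs_mul, hD, Int.natAbs_natCast] using congrArg Int.natAbs hw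
    have hDpos : ((s : ℤ) - (t : ℤ)).natAbs ≠ 0 := by
      intro h; apply hst
      have := Int.natAbs_eq_zero.mp h
      omega
    have hWodd : Odd w.natAbs := Int.natAbs_odd.mpr hwodd
    have hvW : padicValNat 2 w.natAbs = 0 :=
      padicValNat.eq_zero_of_not_dvd (by rwa [Nat.odd_iff, ← Nat.two_dvd_ne_zero] at hWodd)
    have hWpos : w.natAbs ≠ 0 := Int.natAbs_ne_zero.mpr hw0
    have hval := congrArg (padicValNat 2) hnatAbs
    rw [padicValNat.mul (by norm_num) (Nat.mul_ne_zero hDpos hkpos.ne'),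
        padicValNat.mul hDpos hkpos.ne',
        padicValNat.mul hnpos.ne' hWpos, hvW,
        padicValNat.self (by norm_num)] at hval
    apply hv2
    push_cast
    omega
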